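/- Pick-l upper bound via sorting: Let α_{L_1} ≥ α_{L_2} ≥ ... ≥ α_{L_{C(n,l)}} be the values α_L over all l-element subsets L of {1,...,n}, sorted in descending order. Then α_k, defined as the maximum of α_K over all subsets K with |K| ≤ k, satisfies α_k ≤ (1/C(k-1,l-1)) · ∑_{i=1}^{C(k,l)} α_{L_i}, i.e., α_k is at most the sum of the C(k,l) largest values α_L divided by C(k-1,l-1). -/
import Mathlib


open Finset

noncomputable def alphaS {m n : ℕ} (A : Matrix (Fin m) (Fin n) ℝ) (S : Finset (Fin n)) : ℝ :=
  sSup {r : ℝ | ∃ z : Fin n → ℝ, A.mulVec z = 0 ∧ z ≠ 0 ∧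
    r = (∑ i ∈ S, |z i|) / (∑ i, |z i|)}

noncomputable def alphaK {m n : ℕ} (A : Matrix (Fin m) (Fin n) ℝ) (k : ℕ) : ℝ :=
  sSup {r : ℝ | ∃ K : Finset (Fin n), K.card ≤ k ∧ r = alphaS A K}

/-- A strictly monotone map between `Fin` types grows at least as fast as the identity. -/
lemma fin_strictMono_le' {c N : ℕ} (f : Fin c → Fin N) (hf : StrictMono f) :
    ∀ a : ℕ, ∀ j : Fin c, (j : ℕ) = a → a ≤ (f j : ℕ) := by
  intro a
  induction a with
  | zero => intro j _; exact Nat.zero_le _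
  | succ b ih =>
    intro j hj
    have hb : b < c := by omega
    have hlt : (⟨b, hb⟩ : Fin c) < j := by
      simp only [Fin.lt_def]; omega
    have h1 := ih ⟨b, hb⟩ rfl
    have h2 := hf hlt
    simp only [Fin.lt_def] at h2
    omega

lemma fin_strictMono_le {c N : ℕ} (f : Fin c → Fin N) (hf : StrictMono f) (j : Fin c) :
    (j : ℕ) ≤ (f j : ℕ) := fin_strictMono_le' f hf _ j rfl

/-- Sum of an antitone function over any `c`-element subset is at most the sum over
the first `c` indices. -/
lemma sorted_dominates {N c : ℕ} (hcN : c ≤ N) (v : Fin N → ℝ)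
    (hv : ∀ i j : Fin N, i ≤ j → v j ≤ v i) (s : Finset (Fin N)) (hs : s.card = c) :
    ∑ i ∈ s, v i ≤ ∑ i ∈ Finset.univ.filter (fun i : Fin N => (i : ℕ) < c), v i := by
  have h1 : ∑ i ∈ s, v i = ∑ j : Fin c, v (s.orderEmbOfFin hs j) := by
    refine (Finset.sum_nbij (fun j => s.orderEmbOfFin hs j) ?_ ?_ ?_ ?_).symm
    · intro j _; exact s.orderEmbOfFin_mem hs j
    · intro a _ b _ hab; exact (s.orderEmbOfFin hs).injective hab
    · intro i hi
      have : i ∈ Set.range (s.orderEmbOfFin hs) := by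
        rw [s.range_orderEmbOfFin hs]; exact hi
      obtain ⟨j, hj⟩ := this
      exact ⟨j, by simp, hj⟩
    · intros; rfl
  have h2 : ∑ i ∈ Finset.univ.filter (fun i : Fin N => (i : ℕ) < c), v i
      = ∑ j : Fin c, v ⟨j, lt_of_lt_of_le j.isLt hcN⟩ := by
    refine (Finset.sum_nbij (fun j : Fin c => (⟨j, lt_of_lt_of_le j.isLt hcN⟩ : Fin N)) ?_ ?_ ?_ ?_).symm
    · intro j _; simp
    · intro a _ b _ hab
      simpa [Fin.ext_iff] using hab
    · intro i hi
      simp only [Finset.coe_filter, Set.mem_setOf_eq, mem_univ, true_and] at hi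
      exact ⟨⟨(i : ℕ), hi⟩, by simp, by simp [Fin.ext_iff]⟩
    · intros; rfl
  rw [h1, h2]
  apply Finset.sum_le_sum
  intro j _
  apply hv
  rw [Fin.le_def]
  exact fin_strictMono_le _ (s.orderEmbOfFin hs).strictMono j

/-- The number of `l`-element subsets of `K` containing a fixed element `i ∈ K`. -/
lemma count_containing {n l : ℕ} (hl : 1 ≤ l) (K : Finset (Fin n)) {i : Fin n} (hi : i ∈ K) :
    ((K.powersetCard l).filter (fun L => i ∈ L)).card = (K.card - 1).choose (l - 1) := by
  have key : ((K.powersetCard l).filter (fun L => i ∈ L)).card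
      = ((K.erase i).powersetCard (l - 1)).card := by
    refine Finset.card_bij' (fun L _ => L.erase i) (fun L _ => insert i L) ?hi ?hj ?li ?ri
    case hi =>
      intro L hL
      simp only [mem_filter, mem_powersetCard] at hL
      obtain ⟨⟨hsub, hcard⟩, hiL⟩ := hL
      rw [mem_powersetCard]
      constructor
      · exact Finset.erase_subset_erase i hsub
      · rw [Finset.card_erase_of_mem hiL, hcard]
    case hj =>
      intro L hL
      rw [mem_powersetCard] at hL
      obtain ⟨hsub, hcard⟩ := hL
      have hiL : i ∉ L := fun h => (Finset.notMem_erase i K) (hsub h)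
      simp only [mem_filter, mem_powersetCard]
      refine ⟨⟨?_, ?_⟩, Finset.mem_insert_self i L⟩
      · intro x hx
        rcases Finset.mem_insert.1 hx with h | h
        · exact h ▸ hi
        · exact (Finset.erase_subset i K) (hsub h)
      · rw [Finset.card_insert_of_notMem hiL, hcard]; omega
    case li =>
      intro L hL
      simp only [mem_filter] at hL
      exact Finset.insert_erase hL.2
    case ri =>
      intro L hL
      rw [mem_powersetCard] at hL
      have hiL : i ∉ L := fun h => (Finset.notMem_erase i K) (hL.1 h)
      exact Finset.erase_insert hiL
  rw [key, Finset.card_powersetCard, Finset.card_erase_of_mem hi]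

/-- Double counting: summing a weight over all `l`-subsets of `K`. -/
lemma double_count {n l : ℕ} (hl : 1 ≤ l) (K : Finset (Fin n)) (w : Fin n → ℝ) :
    ∑ L ∈ K.powersetCard l, ∑ i ∈ L, w i
      = ((K.card - 1).choose (l - 1) : ℝ) * ∑ i ∈ K, w i := by
  have h1 : ∀ L ∈ K.powersetCard l, ∑ i ∈ L, w i = ∑ i ∈ K, if i ∈ L then w i else 0 := by
    intro L hL
    rw [mem_powersetCard] at hL
    rw [Finset.sum_ite_mem, Finset.inter_eq_right.2 hL.1]
  rw [Finset.sum_congr rfl h1, Finset.sum_comm, Finset.mul_sum]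
  apply Finset.sum_congr rfl
  intro i hi
  rw [Finset.sum_ite, Finset.sum_const_zero, add_zero, Finset.sum_const,
    count_containing hl K hi, nsmul_eq_mul]

lemma alphaS_mem_le_one {m n : ℕ} (A : Matrix (Fin m) (Fin n) ℝ) (S : Finset (Fin n)) :
    ∀ r ∈ {r : ℝ | ∃ z : Fin n → ℝ, A.mulVec z = 0 ∧ z ≠ 0 ∧
      r = (∑ i ∈ S, |z i|) / (∑ i, |z i|)}, r ≤ 1 := by
  rintro r ⟨z, _, hz, rfl⟩
  have hpos : 0 < ∑ i, |z i| := by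
    obtain ⟨i, hi⟩ := Function.ne_iff.1 hz
    apply Finset.sum_pos' (fun j _ => abs_nonneg _) ⟨i, Finset.mem_univ i, abs_pos.2 hi⟩
  rw [div_le_one hpos]
  exact Finset.sum_le_sum_of_subset_of_nonneg (Finset.subset_univ S)
    (fun j _ _ => abs_nonneg _)

lemma alphaS_bddAbove {m n : ℕ} (A : Matrix (Fin m) (Fin n) ℝ) (S : Finset (Fin n)) :
    BddAbove {r : ℝ | ∃ z : Fin n → ℝ, A.mulVec z = 0 ∧ z ≠ 0 ∧
      r = (∑ i ∈ S, |z i|) / (∑ i, |z i|)} :=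
  ⟨1, alphaS_mem_le_one A S⟩

lemma alphaS_nonneg {m n : ℕ} (A : Matrix (Fin m) (Fin n) ℝ)
    (hN : ∃ z : Fin n → ℝ, A.mulVec z = 0 ∧ z ≠ 0) (S : Finset (Fin n)) :
    0 ≤ alphaS A S := by
  obtain ⟨z, hAz, hz⟩ := hN
  have hmem : (∑ i ∈ S, |z i|) / (∑ i, |z i|) ∈ {r : ℝ | ∃ z : Fin n → ℝ,
      A.mulVec z = 0 ∧ z ≠ 0 ∧ r = (∑ i ∈ S, |z i|) / (∑ i, |z i|)} := ⟨z, hAz, hz, rfl⟩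
  have h0 : (0:ℝ) ≤ (∑ i ∈ S, |z i|) / (∑ i, |z i|) :=
    div_nonneg (Finset.sum_nonneg fun _ _ => abs_nonneg _)
      (Finset.sum_nonneg fun _ _ => abs_nonneg _)
  exact le_trans h0 (le_csSup (alphaS_bddAbove A S) hmem)

theorem stmt_2 {m n k l : ℕ} (A : Matrix (Fin m) (Fin n) ℝ)
    (hN : ∃ z : Fin n → ℝ, A.mulVec z = 0 ∧ z ≠ 0)
    (hl : 1 ≤ l) (hlk : l ≤ k) (hkn : k ≤ n)
    (e : Fin (n.choose l) ≃ {L : Finset (Fin n) // L.card = l})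
    (hsort : ∀ i j : Fin (n.choose l), i ≤ j → alphaS A (e j).1 ≤ alphaS A (e i).1) :
    alphaK A k ≤ (1 / ((k - 1).choose (l - 1) : ℝ)) *
      ∑ i ∈ Finset.univ.filter (fun i : Fin (n.choose l) => (i : ℕ) < k.choose l),
        alphaS A (e i).1 := by
  have hC : 0 < ((k - 1).choose (l - 1) : ℝ) := by
    have : 0 < (k - 1).choose (l - 1) := Nat.choose_pos (by omega)
    exact_mod_cast this
  set B : ℝ := (1 / ((k - 1).choose (l - 1) : ℝ)) *
      ∑ i ∈ Finset.univ.filter (fun i : Fin (n.choose l) => (i : ℕ) < k.choose l),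
        alphaS A (e i).1 with hB
  have hBnonneg : 0 ≤ B := by
    apply mul_nonneg (by positivity)
    exact Finset.sum_nonneg fun i _ => alphaS_nonneg A hN _
  apply Real.sSup_le _ hBnonneg
  rintro r ⟨K, hKcard, rfl⟩
  -- extend K to a set K' of cardinality exactly k
  obtain ⟨K', hKK', _, hK'⟩ := Finset.exists_subsuperset_card_eq (Finset.subset_univ K)
    hKcard (by simpa using hkn)
  -- main estimate : alphaS A K' ≤ B
  have hmain : alphaS A K' ≤ B := by
    apply Real.sSup_le _ hBnonneg
    rintro r ⟨z, hAz, hz, rfl⟩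
    set T : ℝ := ∑ i, |z i| with hT
    have hTpos : 0 < T := by
      obtain ⟨i, hi⟩ := Function.ne_iff.1 hz
      exact Finset.sum_pos' (fun j _ => abs_nonneg _) ⟨i, Finset.mem_univ i, abs_pos.2 hi⟩
    -- the finset of indices corresponding to l-subsets of K'
    set s : Finset (Fin (n.choose l)) := (K'.powersetCard l).attach.image
      (fun L => e.symm ⟨L.1, (Finset.mem_powersetCard.1 L.2).2⟩) with hsdef
    have hinj : Function.Injective
        (fun L : {x // x ∈ K'.powersetCard l} =>
          e.symm ⟨L.1, (Finset.mem_powersetCard.1 L.2).2⟩) := by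
      intro L1 L2 h
      have h2 := e.symm.injective h
      exact Subtype.ext (Subtype.mk_eq_mk.mp h2)
    have hscard : s.card = k.choose l := by
      rw [hsdef, Finset.card_image_of_injective _ hinj, Finset.card_attach,
        Finset.card_powersetCard, hK']
    have hsum_eq : ∑ L ∈ K'.powersetCard l, alphaS A L = ∑ i ∈ s, alphaS A (e i).1 := by
      rw [hsdef, Finset.sum_image (fun a _ b _ h => hinj h)]
      rw [← Finset.sum_attach (K'.powersetCard l) (fun L => alphaS A L)]
      apply Finset.sum_congr rfl
      intro L _
      congr 1
      rw [Equiv.apply_symm_apply]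
    -- each term bound
    have hterm : ∀ L ∈ K'.powersetCard l, (∑ i ∈ L, |z i|) / T ≤ alphaS A L := by
      intro L _
      exact le_csSup (alphaS_bddAbove A L) ⟨z, hAz, hz, rfl⟩
    have hdc : ∑ L ∈ K'.powersetCard l, (∑ i ∈ L, |z i|) / T
        = ((k - 1).choose (l - 1) : ℝ) * ((∑ i ∈ K', |z i|) / T) := by
      rw [← Finset.sum_div, double_count hl K' (fun i => |z i|), hK', mul_div_assoc]
    have step1 : ((k - 1).choose (l - 1) : ℝ) * ((∑ i ∈ K', |z i|) / T)
        ≤ ∑ L ∈ K'.powersetCard l, alphaS A L := by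
      rw [← hdc]
      exact Finset.sum_le_sum hterm
    have step2 : ∑ i ∈ s, alphaS A (e i).1
        ≤ ∑ i ∈ Finset.univ.filter (fun i : Fin (n.choose l) => (i : ℕ) < k.choose l),
          alphaS A (e i).1 :=
      sorted_dominates (Nat.choose_le_choose l hkn) (fun i => alphaS A (e i).1)
        hsort s hscard
    have : ((k - 1).choose (l - 1) : ℝ) * ((∑ i ∈ K', |z i|) / T)
        ≤ ∑ i ∈ Finset.univ.filter (fun i : Fin (n.choose l) => (i : ℕ) < k.choose l),
          alphaS A (e i).1 := le_trans step1 (hsum_eq ▸ step2)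
    rw [hB, one_div, ← div_eq_inv_mul, le_div_iff₀ hC, mul_comm]
    exact this
  -- monotonicity : alphaS A K ≤ alphaS A K'
  have hmono : alphaS A K ≤ alphaS A K' := by
    apply Real.sSup_le _ (alphaS_nonneg A hN K')
    rintro r ⟨z, hAz, hz, rfl⟩
    have hpos : 0 < ∑ i, |z i| := by
      obtain ⟨i, hi⟩ := Function.ne_iff.1 hz
      exact Finset.sum_pos' (fun j _ => abs_nonneg _) ⟨i, Finset.mem_univ i, abs_pos.2 hi⟩
    have h1 : (∑ i ∈ K, |z i|) / (∑ i, |z i|) ≤ (∑ i ∈ K', |z i|) / (∑ i, |z i|) := by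
      gcongr
    exact le_trans h1 (le_csSup (alphaS_bddAbove A K') ⟨z, hAz, hz, rfl⟩)
  exact le_trans hmono hmain
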